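/- arXiv:1908.05420 — 5 statements merged into one kernel-verified Lean document; each statement's English description precedes it below -/
import Mathlib

section
/- Let D be a category with finite coproducts and let i : D ⥤ D' be a functor preserving finite coproducts. Then for every object d' of D', the costructured-arrow category over d' — whose objects are pairs (d, φ) with d an object of D and φ : i(d) ⟶ d', and whose morphisms (d₀, φ₀) → (d₁, φ₁) are morphisms ψ : d₀ ⟶ d₁ of D with i(ψ) ≫ φ₁ = φ₀ — is a sifted category. (Corollary 1.7 of the paper.) -/
open CategoryTheory CategoryTheory.Limits

universe v₁ v₂ u₁ u₂

/-- Let `D` be a category with finite coproducts and let `i : D ⥤ D'` be a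
functor preserving finite coproducts.  Then for every object `d'` of `D'`, the
costructured-arrow category over `d'` (objects: pairs `(d, φ)` with `φ : i.obj d ⟶ d'`;
morphisms: `ψ : d₀ ⟶ d₁` with `i.map ψ ≫ φ₁ = φ₀`) is sifted. -/
theorem stmt_0 {D : Type u₁} [Category.{v₁} D] {D' : Type u₂} [Category.{v₂} D']
    [HasFiniteCoproducts D] (i : D ⥤ D') [PreservesFiniteCoproducts i] (d' : D') :
    IsSifted (CostructuredArrow i d') := by
  haveI : HasBinaryCoproducts D := inferInstance
  haveI : PreservesColimitsOfShape (Discrete WalkingPair) i :=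
    inferInstance
  haveI : HasColimitsOfShape (Discrete WalkingPair) (CostructuredArrow i d') :=
    CostructuredArrow.hasColimitsOfShape
  haveI : HasInitial D := inferInstance
  haveI : PreservesColimitsOfShape (Discrete PEmpty.{1}) i :=
    inferInstance
  haveI : IsInitial (i.obj (⊥_ D)) :=
    (initialIsInitial.isInitialObj i _)
  haveI : Nonempty (CostructuredArrow i d') :=
    ⟨CostructuredArrow.mk (this.to d')⟩
  exact IsSifted.isSifted_of_hasBinaryCoproducts_and_nonempty
end

section
/- Let D be a category with finite coproducts, let i : D ⥤ D' be a functor preserving finite coproducts, let C₁ be a category admitting all small colimits, let Φ : C₁ ⥤ C₂ be a functor preserving sifted colimits, and let F : D ⥤ C₁ be any functor. Then the composite of the pointwise left Kan extension Lan_i F with Φ, equipped with the natural transformation obtained by whiskering the unit F ⟶ i ⋙ (Lan_i F) with Φ, is a left Kan extension of F ⋙ Φ along i. Equivalently, the canonical comparison natural transformation Lan_i(F ⋙ Φ) ⟶ (Lan_i F) ⋙ Φ is an isomorphism. (Proposition 1.8 of the paper.) -/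
open CategoryTheory CategoryTheory.Limits

universe v v₂ u₁ u₂

/-- Let `D` be a small category with finite coproducts, `i : D ⥤ D'` a
functor to a small category preserving finite coproducts, `C₁` a category admitting all
small colimits, `Φ : C₁ ⥤ C₂` a functor preserving sifted colimits, and `F : D ⥤ C₁` any
functor.  If `(F', α)` is a pointwise left Kan extension of `F` along `i`, then
`F' ⋙ Φ`, equipped with the natural transformation obtained by whiskering the unit
`α : F ⟶ i ⋙ F'` with `Φ`, is a left Kan extension of `F ⋙ Φ` along `i`. -/
theorem stmt_1 {D : Type v} [SmallCategory D] {D' : Type v} [SmallCategory D']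
    [HasFiniteCoproducts D] (i : D ⥤ D') [PreservesFiniteCoproducts i]
    {C₁ : Type u₁} [Category.{v} C₁] [HasColimits C₁]
    {C₂ : Type u₂} [Category.{v₂} C₂] (Φ : C₁ ⥤ C₂)
    (hΦ : ∀ (A : Type v) [SmallCategory A] [IsSifted A], PreservesColimitsOfShape A Φ)
    (F : D ⥤ C₁) (F' : D' ⥤ C₁) (α : F ⟶ i ⋙ F')
    (hpointwise : (Functor.LeftExtension.mk F' α).IsPointwiseLeftKanExtension) :
    (F' ⋙ Φ).IsLeftKanExtension
      (Functor.whiskerRight α Φ ≫ (Functor.associator i F' Φ).hom) := by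
  have hE' : (Functor.LeftExtension.mk (F' ⋙ Φ)
      (Functor.whiskerRight α Φ ≫ (Functor.associator i F' Φ).hom)).IsPointwiseLeftKanExtension := by
    intro Y
    haveI : Nonempty (CostructuredArrow i Y) :=
      ⟨CostructuredArrow.mk ((initialIsInitial.isInitialObj i _).to Y)⟩
    haveI : IsSifted (CostructuredArrow i Y) := inferInstance
    haveI := hΦ (CostructuredArrow i Y)
    exact IsColimit.ofIsoColimit (isColimitOfPreserves Φ (hpointwise Y))
      (Cocones.ext (Iso.refl _) (by intro g; simp; exact (Category.comp_id _).trans (Φ.map_comp _ _)))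
  exact hE'.isLeftKanExtension
end

section
/- Let M be a monoid. Then the category FFM_{/M} — whose objects are pairs (H, f) with H a monoid isomorphic to a free monoid on a finite type and f : H →* M a monoid homomorphism, and whose morphisms (H₀, f₀) → (H₁, f₁) are monoid homomorphisms φ : H₀ →* H₁ with f₁ ∘ φ = f₀ — is a sifted category. (The discrete (1-categorical) case of the first assertion of Proposition 2.9 of the paper.) -/
open CategoryTheory CategoryTheory.Limits Monoid

universe u

/-- The property of a bundled monoid of being isomorphic to a free monoid on a finite type.
`FFM` is the full subcategory of `MonCat` spanned by the monoids satisfying this property. -/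
def IsFreeFinMonoid (N : MonCat.{u}) : Prop :=
  ∃ α : Type u, Finite α ∧ Nonempty (N ≃* FreeMonoid α)

noncomputable def freeMonoidCoprodEquiv (α β : Type u) :
    Coprod (FreeMonoid α) (FreeMonoid β) ≃* FreeMonoid (α ⊕ β) :=
  MonoidHom.toMulEquiv
    (Coprod.lift (FreeMonoid.map Sum.inl) (FreeMonoid.map Sum.inr))
    (FreeMonoid.lift (Sum.elim (fun a => Coprod.inl (FreeMonoid.of a))
      (fun b => Coprod.inr (FreeMonoid.of b))))
    (by apply Coprod.hom_ext <;> apply FreeMonoid.hom_eq <;> intro x <;> simp)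
    (by apply FreeMonoid.hom_eq; intro x; cases x <;> simp)

abbrev FFMover (M : Type u) [Monoid M] :=
  CostructuredArrow (ObjectProperty.ι IsFreeFinMonoid) (MonCat.of M)

section
variable (M : Type u) [Monoid M]

def coprodLeft (A B : FFMover M) : ObjectProperty.FullSubcategory IsFreeFinMonoid.{u} :=
  ⟨MonCat.of (Coprod A.left.obj B.left.obj), by
    obtain ⟨α, hα, ⟨eA⟩⟩ := A.left.property
    obtain ⟨β, hβ, ⟨eB⟩⟩ := B.left.property
    exact ⟨α ⊕ β, inferInstance, ⟨(MulEquiv.coprodCongr eA eB).trans (freeMonoidCoprodEquiv α β)⟩⟩⟩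

/-- The coproduct object in `FFM_{/M}`. -/
noncomputable def coprodObj (A B : FFMover M) : FFMover M :=
  CostructuredArrow.mk (Y := coprodLeft M A B)
    (MonCat.ofHom (Coprod.lift (A.hom.hom : A.left.obj →* M) (B.hom.hom : B.left.obj →* M) :
      Coprod A.left.obj B.left.obj →* M))

noncomputable def coprodInl (A B : FFMover M) : A ⟶ coprodObj M A B :=
  CostructuredArrow.homMk
    (show A.left ⟶ coprodLeft M A B from
      ObjectProperty.homMk (MonCat.ofHom (Coprod.inl : A.left.obj →* Coprod A.left.obj B.left.obj)))
    (by ext x; simp [coprodObj]; rfl)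

noncomputable def coprodInr (A B : FFMover M) : B ⟶ coprodObj M A B :=
  CostructuredArrow.homMk
    (show B.left ⟶ coprodLeft M A B from
      ObjectProperty.homMk (MonCat.ofHom (Coprod.inr : B.left.obj →* Coprod A.left.obj B.left.obj)))
    (by ext x; simp [coprodObj]; rfl)

end

section
variable (M : Type u) [Monoid M]

noncomputable def coprodDesc {A B T : FFMover M} (f : A ⟶ T) (g : B ⟶ T) :
    coprodObj M A B ⟶ T :=
  CostructuredArrow.homMk
    (show coprodLeft M A B ⟶ T.left from
      ObjectProperty.homMk (MonCat.ofHom (Coprod.lift (f.left.hom.hom : A.left.obj →* T.left.obj) (g.left.hom.hom : B.left.obj →* T.left.obj))))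
    (by
      apply MonCat.hom_ext
      apply Coprod.hom_ext
      · ext x
        have := CostructuredArrow.w f
        exact congrArg (fun h => h.hom x) this
      · ext x
        have := CostructuredArrow.w g
        exact congrArg (fun h => h.hom x) this)

noncomputable def coprodIsColimit (A B : FFMover M) :
    IsColimit (BinaryCofan.mk (coprodInl M A B) (coprodInr M A B)) := by
  apply BinaryCofan.IsColimit.mk _ (fun f g => coprodDesc M f g)
  · intro T f g
    apply CostructuredArrow.hom_ext
    ext x
    exact Coprod.lift_apply_inl (f.left.hom.hom : A.left.obj →* T.left.obj) (g.left.hom.hom : B.left.obj →* T.left.obj) x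
  · intro T f g
    apply CostructuredArrow.hom_ext
    ext x
    exact Coprod.lift_apply_inr (f.left.hom.hom : A.left.obj →* T.left.obj) (g.left.hom.hom : B.left.obj →* T.left.obj) x
  · intro T f g m h₁ h₂
    apply CostructuredArrow.hom_ext
    apply InducedCategory.hom_ext
    apply MonCat.hom_ext
    apply Coprod.hom_ext
    · ext x
      have h := congrArg CommaMorphism.left h₁
      exact DFunLike.congr_fun
        (show ((m.left.hom.hom : Coprod A.left.obj B.left.obj →* T.left.obj).comp Coprod.inl) =
          (f.left.hom.hom : A.left.obj →* T.left.obj) from congrArg (fun k => k.hom.hom) h) x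
    · ext x
      have h := congrArg CommaMorphism.left h₂
      exact DFunLike.congr_fun
        (show ((m.left.hom.hom : Coprod A.left.obj B.left.obj →* T.left.obj).comp Coprod.inr) =
          (g.left.hom.hom : B.left.obj →* T.left.obj) from congrArg (fun k => k.hom.hom) h) x

noncomputable instance : HasBinaryCoproducts (FFMover M) := by
  have : ∀ {X Y : FFMover M}, HasColimit (pair X Y) := fun {X Y} =>
    HasColimit.mk ⟨_, coprodIsColimit M X Y⟩
  exact hasBinaryCoproducts_of_hasColimit_pair _

instance : Nonempty (FFMover M) :=
  ⟨CostructuredArrow.mk (Y := ⟨MonCat.of (FreeMonoid PEmpty.{u+1}),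
      ⟨PEmpty, inferInstance, ⟨MulEquiv.refl _⟩⟩⟩)
    (MonCat.ofHom (FreeMonoid.lift (fun x => PEmpty.elim x) : FreeMonoid PEmpty.{u+1} →* M))⟩

end

/-- For any monoid `M`, the category `FFM_{/M}` — whose objects are pairs
`(H, f)` with `H` a monoid isomorphic to a free monoid on a finite type and `f : H →* M`,
and whose morphisms `(H₀, f₀) → (H₁, f₁)` are monoid homomorphisms `φ : H₀ →* H₁` with
`f₁ ∘ φ = f₀` — is sifted. -/
theorem stmt_4 (M : Type u) [Monoid M] :
    IsSifted (CostructuredArrow (ObjectProperty.ι IsFreeFinMonoid) (MonCat.of M)) := by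
  infer_instance
end

section
/- Let C be a category admitting all small colimits, let I be a small connected category, let X, Y : I ⥤ C be functors and α : X ⟶ Y a natural transformation. Let X̄ be the colimit of X with colimit cocone ι. Define Z : I ⥤ C by letting Z(i) be the pushout of ι_i : X(i) ⟶ X̄ and α_i : X(i) ⟶ Y(i), with functoriality induced by the universal property of pushouts (for φ : i ⟶ j, the map Z(i) ⟶ Z(j) is induced by the identity of X̄ and Y(φ)). Then the natural transformation Y ⟶ Z whose components are the pushout coprojections Y(i) ⟶ Z(i) induces an isomorphism colim Y ≅ colim Z. (Proposition 5.3 of the paper, in the 1-categorical setting where the contractibility hypothesis on I becomes connectedness.) -/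
open CategoryTheory CategoryTheory.Limits

universe v u

variable {C : Type u} [Category.{v} C] [HasColimits C]
variable {I : Type v} [SmallCategory I]
variable (X Y : I ⥤ C) (α : X ⟶ Y)

/-- The functor `Z : I ⥤ C` sending `i` to the pushout of the colimit coprojection
`ι_i : X i ⟶ colim X` and `α_i : X i ⟶ Y i`, with functoriality induced by the identity of
`colim X` and by `Y`. -/
noncomputable def pushoutDiagram : I ⥤ C where
  obj i := pushout (colimit.ι X i) (α.app i)
  map {i j} φ :=
    pushout.map (colimit.ι X i) (α.app i) (colimit.ι X j) (α.app j)
      (𝟙 (colimit X)) (Y.map φ) (X.map φ) (by simp) (α.naturality φ).symm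
  map_id i := by ext <;> simp
  map_comp {i j k} φ ψ := by simp only [Functor.map_comp, pushout.map_comp, Category.comp_id]

/-- The natural transformation `Y ⟶ Z` whose components are the pushout coprojections
`Y i ⟶ Z i`. -/
noncomputable def toPushoutDiagram : Y ⟶ pushoutDiagram X Y α where
  app i := pushout.inr (colimit.ι X i) (α.app i)
  naturality i j φ := by
    dsimp [pushoutDiagram]
    exact (pushout.inr_desc _ _ _).symm

/-- Let `C` be a category admitting all small colimits, `I` a small
connected category, `X Y : I ⥤ C` functors and `α : X ⟶ Y` a natural transformation.
Let `Z : I ⥤ C` be the functor `i ↦ (colim X) ⊔_{X i} (Y i)` (pushout of the colimit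
coprojection and `α_i`).  Then the natural transformation `Y ⟶ Z`, given componentwise by
the pushout coprojections, induces an isomorphism `colim Y ≅ colim Z`. -/
theorem stmt_7 [IsConnected I] : IsIso (colimMap (toPushoutDiagram X Y α)) := by
  have key : ∀ i j : I,
      pushout.inl (colimit.ι X i) (α.app i) ≫ colimit.ι (pushoutDiagram X Y α) i =
      pushout.inl (colimit.ι X j) (α.app j) ≫ colimit.ι (pushoutDiagram X Y α) j := by
    intro i j
    refine constant_of_preserves_morphisms
      (fun k => pushout.inl (colimit.ι X k) (α.app k) ≫ colimit.ι (pushoutDiagram X Y α) k)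
      ?_ i j
    intro a b f
    rw [← colimit.w (pushoutDiagram X Y α) f]
    erw [← Category.assoc]
    congr 1
    dsimp [pushoutDiagram]
    simp [pushout.map]
    erw [pushout.inl_desc]
  let g : colimit (pushoutDiagram X Y α) ⟶ colimit Y :=
    colimit.desc _
      { pt := colimit Y
        ι :=
          { app := fun i => pushout.desc (colimMap α) (colimit.ι Y i) (by simp)
            naturality := fun i j φ => by
              dsimp [pushoutDiagram]
              ext
              · simp [pushout.map]
                erw [pushout.inl_desc_assoc, pushout.inl_desc, pushout.inl_desc]
              · simp [pushout.map]
                erw [pushout.inr_desc_assoc, pushout.inr_desc]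
                erw [Category.assoc, pushout.inr_desc]
                simp } }
  refine ⟨g, ?_, ?_⟩
  · apply colimit.hom_ext
    intro i
    simp [g, toPushoutDiagram]
    exact pushout.inr_desc _ _ _
  · apply colimit.hom_ext
    intro i
    have hι : colimit.ι (pushoutDiagram X Y α) i ≫ g =
        pushout.desc (colimMap α) (colimit.ι Y i) (by simp) := by
      simp [g]
      rfl
    rw [← Category.assoc, hι, Category.comp_id]
    refine pushout.hom_ext ?_ ?_
    · erw [pushout.inl_desc_assoc]
      apply colimit.hom_ext
      intro j
      rw [ι_colimMap_assoc, ι_colimMap]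
      dsimp [toPushoutDiagram]
      erw [← Category.assoc, ← pushout.condition, Category.assoc, key j i]
    · erw [pushout.inr_desc_assoc, ι_colimMap]
      dsimp [toPushoutDiagram]
      rfl
end

section
/- Let K be a field, n a natural number, λ : Fin n → ℤ a function, and ξ an n × n matrix over K. Assume that ξ is nilpotent and that ξ i j = 0 whenever λ i < λ j. Then ∑_{i} λ(i) • (ξ i i) = 0 in K, where • denotes the ℤ-scalar action on K. Equivalently, the trace of D · ξ vanishes, where D is the diagonal matrix with entries the images of λ(i) in K. -/
open Matrix Finset

/-- **Statement 11.** Let `K` be a field, `n` a natural number, `l : Fin n → ℤ` a function and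
`ξ` an `n × n` matrix over `K`.  If `ξ` is nilpotent and `ξ i j = 0` whenever `l i < l j`,
then `∑ i, l i • ξ i i = 0` in `K` (the vanishing of the pairing `⟨l, ξ⟩`). -/
theorem stmt_11 (K : Type*) [Field K] (n : ℕ) (l : Fin n → ℤ)
    (ξ : Matrix (Fin n) (Fin n) K)
    (hnil : IsNilpotent ξ)
    (htri : ∀ i j : Fin n, l i < l j → ξ i j = 0) :
    ∑ i : Fin n, l i • ξ i i = 0 := by
  -- powers of ξ stay triangular for the order induced by l
  have tri : ∀ m, ∀ i j, l i < l j → (ξ ^ m) i j = 0 := by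
    intro m
    induction m with
    | zero =>
      intro i j h
      have hij : i ≠ j := fun e => absurd (e ▸ h) (lt_irrefl _)
      simp [Matrix.one_apply_ne hij]
    | succ m ih =>
      intro i j h
      rw [pow_succ, Matrix.mul_apply]
      refine Finset.sum_eq_zero fun k _ => ?_
      rcases lt_or_ge (l i) (l k) with hk | hk
      · rw [ih i k hk, zero_mul]
      · rw [htri k j (lt_of_le_of_lt hk h), mul_zero]
  -- the block-diagonal part of ξ
  set ξ₀ : Matrix (Fin n) (Fin n) K :=
    Matrix.of (fun i j => if l i = l j then ξ i j else 0) with hξ₀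
  have hξ₀app : ∀ i j, ξ₀ i j = if l i = l j then ξ i j else 0 := fun i j => rfl
  -- powers of ξ₀ agree with powers of ξ on diagonal blocks, vanish off blocks
  have blk : ∀ m, ∀ i j, (ξ₀ ^ (m + 1)) i j =
      if l i = l j then (ξ ^ (m + 1)) i j else 0 := by
    intro m
    induction m with
    | zero => intro i j; simp [hξ₀app, pow_one]
    | succ m ih =>
      intro i j
      rw [pow_succ' ξ₀ (m+1), Matrix.mul_apply]
      by_cases h : l i = l j
      · rw [if_pos h, pow_succ' ξ (m+1), Matrix.mul_apply]
        refine Finset.sum_congr rfl fun k _ => ?_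
        rw [ih k j]
        by_cases hk : l i = l k
        · rw [if_pos (hk ▸ h), hξ₀app, if_pos hk]
        · have h1 : ξ₀ i k = 0 := by rw [hξ₀app, if_neg hk]
          rw [h1, zero_mul]
          rcases lt_or_gt_of_ne hk with hlt | hgt
          · rw [htri i k hlt, zero_mul]
          · rw [tri (m + 1) k j (h ▸ hgt), mul_zero]
      · rw [if_neg h]
        refine Finset.sum_eq_zero fun k _ => ?_
        rw [ih k j]
        by_cases hk : l i = l k
        · rw [if_neg (fun e => h (hk.trans e)), mul_zero]
        · rw [hξ₀app, if_neg hk, zero_mul]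
  -- hence ξ₀ is nilpotent
  have hnil₀ : IsNilpotent ξ₀ := by
    obtain ⟨k, hk⟩ := hnil
    refine ⟨k + 1, ?_⟩
    ext i j
    rw [Matrix.zero_apply, blk k i j]
    by_cases h : l i = l j
    · rw [if_pos h, pow_succ, hk, Matrix.zero_mul, Matrix.zero_apply]
    · rw [if_neg h]
  -- the diagonal weight matrix commutes with ξ₀
  set D : Matrix (Fin n) (Fin n) K := Matrix.diagonal (fun i => (l i : K)) with hD
  have hcomm : Commute D ξ₀ := by
    unfold Commute SemiconjBy
    ext i j
    rw [hD, Matrix.diagonal_mul, Matrix.mul_diagonal, hξ₀app]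
    by_cases h : l i = l j
    · rw [if_pos h, h, mul_comm]
    · rw [if_neg h, mul_zero, zero_mul]
  have hnilD : IsNilpotent (D * ξ₀) := hcomm.isNilpotent_mul_left hnil₀
  have htr : IsNilpotent (Matrix.trace (D * ξ₀)) :=
    Matrix.isNilpotent_trace_of_isNilpotent hnilD
  have htr0 : Matrix.trace (D * ξ₀) = 0 := htr.eq_zero
  calc ∑ i : Fin n, l i • ξ i i = Matrix.trace (D * ξ₀) := by
        rw [Matrix.trace]
        refine Finset.sum_congr rfl fun i _ => ?_
        rw [Matrix.diag_apply, hD, Matrix.diagonal_mul, hξ₀app, if_pos rfl,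
          zsmul_eq_mul]
    _ = 0 := htr0
end
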